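/- Let G = (V,E) be a finite simple graph with node weights w ∈ ℝ_+^V and edge weights satisfying w_{ij} ≥ max{w_i, w_j} for all edges ij ∈ E. Then for any node i ∈ V, rk_H(G,w) ≤ max{rk_H(G−i,w) + 1, rk_H(G⊖i,w) + 1, 3}, where G−i is the graph obtained by deleting node i and G⊖i is the graph obtained by deleting i together with all its neighbours (the node and edge weights of the subgraphs being the restrictions of those of G). -/

import Mathlib

open MvPolynomial Finset

noncomputable def handTerm {V : Type*} [DecidableEq V] (T I : Finset V) : MvPolynomial V ℝ :=
  (∏ i ∈ I, X i) * ∏ j ∈ T \ I, (1 - X j)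

def InHandelman {V : Type*} [Fintype V] [DecidableEq V] (t : ℕ)
    (p : MvPolynomial V ℝ) : Prop :=
  ∃ c : Finset V → Finset V → ℝ,
    (∀ T I, 0 ≤ c T I) ∧
    p = ∑ T ∈ Finset.univ.filter (fun T : Finset V => T.card ≤ t),
          ∑ I ∈ T.powerset, C (c T I) * handTerm T I

open Classical in
noncomputable def pGW {V : Type*} [Fintype V] (G : SimpleGraph V)
    (w : V → ℝ) (W : V → V → ℝ) : MvPolynomial V ℝ :=
  (∑ i, C (w i) * X i) -
    C (2⁻¹ : ℝ) * ∑ q ∈ Finset.univ.filter (fun q : V × V => G.Adj q.1 q.2),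
      C (W q.1 q.2) * (X q.1 * X q.2)

noncomputable def alphaW {V : Type*} (G : SimpleGraph V) (w : V → ℝ) : ℝ :=
  sSup {v : ℝ | ∃ S : Finset V, (∀ i ∈ S, ∀ j ∈ S, ¬ G.Adj i j) ∧ v = ∑ i ∈ S, w i}

section Aux
variable {V : Type*} [DecidableEq V]

lemma finset_map_sdiff {V' : Type*} [DecidableEq V'] (e : V' ↪ V) (T I : Finset V') :
    (T \ I).map e = T.map e \ I.map e := by
  ext x
  simp only [mem_map, mem_sdiff]
  constructor
  · rintro ⟨a, ⟨haT, haI⟩, rfl⟩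
    exact ⟨⟨a, haT, rfl⟩, fun ⟨b, hbI, hbe⟩ => haI (e.injective hbe ▸ hbI)⟩
  · rintro ⟨⟨a, haT, rfl⟩, h⟩
    exact ⟨a, ⟨haT, fun haI => h ⟨a, haI, rfl⟩⟩, rfl⟩

lemma rename_handTerm {V' : Type*} [DecidableEq V'] (e : V' ↪ V) (T I : Finset V') :
    rename (e : V' → V) (handTerm T I) = handTerm (T.map e) (I.map e) := by
  simp only [handTerm, map_mul, map_prod, map_sub, map_one, rename_X, ← finset_map_sdiff,
    Finset.prod_map, Function.Embedding.coeFn_mk, Function.comp]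

lemma handTerm_self (T : Finset V) : handTerm T T = ∏ j ∈ T, X j := by
  simp [handTerm]

lemma handTerm_single_empty (i : V) : handTerm {i} ∅ = 1 - X i := by
  simp [handTerm]

lemma handTerm_single (i : V) : handTerm {i} {i} = X i := by
  simp [handTerm]

lemma oneSub_mul_handTerm {i : V} {T : Finset V} (hi : i ∉ T) (I : Finset V) (hI : I ⊆ T) :
    (1 - X i) * handTerm T I = handTerm (insert i T) I := by
  have hiI : i ∉ I := fun h => hi (hI h)
  have h1 : insert i T \ I = insert i (T \ I) := by
    rw [insert_sdiff_of_notMem _ hiI]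
  have h2 : i ∉ T \ I := fun h => hi (mem_sdiff.1 h).1
  rw [handTerm, handTerm, h1, prod_insert h2]
  ring

lemma X_mul_handTerm {i : V} {T : Finset V} (hi : i ∉ T) (I : Finset V) (hI : I ⊆ T) :
    X i * handTerm T I = handTerm (insert i T) (insert i I) := by
  have hiI : i ∉ I := fun h => hi (hI h)
  have h1 : insert i T \ insert i I = T \ I := by
    ext x
    simp only [mem_sdiff, mem_insert, not_or]
    constructor
    · rintro ⟨hx1, hx2, hx3⟩
      exact ⟨hx1.resolve_left hx2, hx3⟩
    · rintro ⟨hx1, hx2⟩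
      exact ⟨Or.inr hx1, fun h => hi (h ▸ hx1), hx2⟩
  have h2 : i ∉ I := hiI
  rw [handTerm, handTerm, h1, prod_insert h2]
  ring

end Aux

section IH
open Classical
variable {V : Type*} [Fintype V] [DecidableEq V]

lemma IH_sum {ι : Type*} [DecidableEq ι] {t : ℕ} (s : Finset ι) (c : ι → ℝ)
    (T I : ι → Finset V)
    (hc : ∀ k ∈ s, 0 ≤ c k) (hI : ∀ k ∈ s, I k ⊆ T k) (hT : ∀ k ∈ s, (T k).card ≤ t) :
    InHandelman t (∑ k ∈ s, C (c k) * handTerm (T k) (I k)) := by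
  classical
  refine ⟨fun T' I' => ∑ k ∈ s.filter (fun k => (T k, I k) = (T', I')), c k, ?_, ?_⟩
  · intro T' I'
    exact Finset.sum_nonneg fun k hk => hc k (Finset.mem_filter.1 hk).1
  · rw [Finset.sum_sigma']
    have hmap : ∀ k ∈ s, ((⟨T k, I k⟩ : Σ _ : Finset V, Finset V)) ∈
        (Finset.univ.filter (fun T : Finset V => T.card ≤ t)).sigma (fun T => T.powerset) := by
      intro k hk
      simp only [Finset.mem_sigma, Finset.mem_filter, Finset.mem_univ, true_and,
        Finset.mem_powerset]
      exact ⟨hT k hk, hI k hk⟩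
    rw [← Finset.sum_fiberwise_of_maps_to (g := fun k => ((⟨T k, I k⟩ : Σ _ : Finset V, Finset V)))
      hmap (fun k => C (c k) * handTerm (T k) (I k))]
    refine Finset.sum_congr rfl fun x _ => ?_
    rw [map_sum, Finset.sum_mul]
    refine Finset.sum_congr ?_ fun k hk => ?_
    · ext k
      simp [Finset.mem_filter, Sigma.ext_iff, Prod.ext_iff]
    · have := (Finset.mem_filter.1 hk).2
      rw [Prod.mk.injEq] at this
      rw [this.1, this.2]

lemma IH_add {t : ℕ} {p q : MvPolynomial V ℝ} (hp : InHandelman t p) (hq : InHandelman t q) :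
    InHandelman t (p + q) := by
  obtain ⟨c, hc, hcp⟩ := hp
  obtain ⟨d, hd, hdq⟩ := hq
  refine ⟨fun T I => c T I + d T I, fun T I => add_nonneg (hc T I) (hd T I), ?_⟩
  rw [hcp, hdq, ← Finset.sum_add_distrib]
  refine Finset.sum_congr rfl fun T _ => ?_
  rw [← Finset.sum_add_distrib]
  refine Finset.sum_congr rfl fun I _ => ?_
  rw [map_add, add_mul]

lemma IH_resum {t t' : ℕ} {p : MvPolynomial V ℝ} (h : InHandelman t p) (ht : t ≤ t') :
    InHandelman t' p := by
  obtain ⟨c, hc, hcp⟩ := h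
  rw [hcp, Finset.sum_sigma']
  exact IH_sum (ι := Σ _ : Finset V, Finset V) _ (fun k => c k.1 k.2) (fun k => k.1)
    (fun k => k.2) (fun k _ => hc k.1 k.2)
    (fun k hk => Finset.mem_powerset.1 (Finset.mem_sigma.1 hk).2)
    (fun k hk => le_trans
      (Finset.mem_filter.1 (Finset.mem_sigma.1 hk).1).2 ht)

lemma IH_single {t : ℕ} {c : ℝ} {T I : Finset V} (hc : 0 ≤ c) (hI : I ⊆ T)
    (hT : T.card ≤ t) : InHandelman t (C c * handTerm T I) := by
  have := IH_sum (V := V) (ι := Unit) {()} (fun _ => c) (fun _ => T) (fun _ => I)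
    (fun _ _ => hc) (fun _ _ => hI) (fun _ _ => hT)
  simpa using this

lemma IH_mul_rename {V' : Type*} [Fintype V'] [DecidableEq V'] (e : V' ↪ V) {i : V}
    (hi : ∀ x, e x ≠ i) {t : ℕ} {q : MvPolynomial V' ℝ} (h : InHandelman t q) :
    InHandelman (t + 1) ((1 - X i) * rename (e : V' → V) q) ∧
    InHandelman (t + 1) (X i * rename (e : V' → V) q) := by
  obtain ⟨c, hc, hcq⟩ := h
  have hnotmem : ∀ T : Finset V', i ∉ T.map e := by
    intro T hmem
    obtain ⟨x, _, hx⟩ := Finset.mem_map.1 hmem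
    exact hi x hx
  have hcard : ∀ T : Finset V', T ∈ Finset.univ.filter (fun T : Finset V' => T.card ≤ t) →
      (insert i (T.map e)).card ≤ t + 1 := by
    intro T hT
    calc (insert i (T.map e)).card ≤ (T.map e).card + 1 := Finset.card_insert_le _ _
    _ ≤ t + 1 := by rw [Finset.card_map]; exact Nat.add_le_add_right (Finset.mem_filter.1 hT).2 _
  constructor
  · rw [hcq, map_sum, Finset.mul_sum]
    have : ∀ T ∈ Finset.univ.filter (fun T : Finset V' => T.card ≤ t),
        (1 - X i) * (rename (e : V' → V) (∑ I ∈ T.powerset, C (c T I) * handTerm T I)) =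
        ∑ I ∈ T.powerset, C (c T I) * handTerm (insert i (T.map e)) (I.map e) := by
      intro T hT
      rw [map_sum, Finset.mul_sum]
      refine Finset.sum_congr rfl fun I hI => ?_
      rw [map_mul, rename_C, rename_handTerm, mul_left_comm,
        oneSub_mul_handTerm (hnotmem T) _ (Finset.map_subset_map.2 (Finset.mem_powerset.1 hI))]
    rw [Finset.sum_congr rfl this, Finset.sum_sigma']
    exact IH_sum (ι := Σ _ : Finset V', Finset V') (t := t + 1) _ (fun k => c k.1 k.2) (fun k => insert i (k.1.map e)) (fun k => k.2.map e)
      (fun k _ => hc _ _)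
      (fun k hk => Finset.Subset.trans
        (Finset.map_subset_map.2 (Finset.mem_powerset.1 (Finset.mem_sigma.1 hk).2))
        (Finset.subset_insert _ _))
      (fun k hk => hcard _ (Finset.mem_sigma.1 hk).1)
  · rw [hcq, map_sum, Finset.mul_sum]
    have : ∀ T ∈ Finset.univ.filter (fun T : Finset V' => T.card ≤ t),
        (X i) * (rename (e : V' → V) (∑ I ∈ T.powerset, C (c T I) * handTerm T I)) =
        ∑ I ∈ T.powerset, C (c T I) * handTerm (insert i (T.map e)) (insert i (I.map e)) := by
      intro T hT
      rw [map_sum, Finset.mul_sum]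
      refine Finset.sum_congr rfl fun I hI => ?_
      rw [map_mul, rename_C, rename_handTerm, mul_left_comm,
        X_mul_handTerm (hnotmem T) _ (Finset.map_subset_map.2 (Finset.mem_powerset.1 hI))]
    rw [Finset.sum_congr rfl this, Finset.sum_sigma']
    exact IH_sum (ι := Σ _ : Finset V', Finset V') (t := t + 1) _ (fun k => c k.1 k.2) (fun k => insert i (k.1.map e))
      (fun k => insert i (k.2.map e))
      (fun k _ => hc _ _)
      (fun k hk => Finset.insert_subset_insert _
        (Finset.map_subset_map.2 (Finset.mem_powerset.1 (Finset.mem_sigma.1 hk).2)))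
      (fun k hk => hcard _ (Finset.mem_sigma.1 hk).1)

end IH

section Alpha
variable {V : Type*} [Fintype V] [DecidableEq V] (G : SimpleGraph V) (w : V → ℝ)

lemma alphaW_bddAbove :
    BddAbove {v : ℝ | ∃ S : Finset V, (∀ i ∈ S, ∀ j ∈ S, ¬ G.Adj i j) ∧ v = ∑ i ∈ S, w i} := by
  refine Set.Finite.bddAbove (Set.Finite.subset
    (Finset.finite_toSet ((Finset.univ.powerset).image fun S : Finset V => ∑ i ∈ S, w i)) ?_)
  rintro v ⟨S, _, rfl⟩
  simp only [Finset.coe_image, Set.mem_image, Finset.mem_coe, Finset.mem_powerset]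
  exact ⟨S, by simp, rfl⟩

lemma le_alphaW {S : Finset V} (hS : ∀ a ∈ S, ∀ b ∈ S, ¬ G.Adj a b) :
    ∑ a ∈ S, w a ≤ alphaW G w :=
  le_csSup (alphaW_bddAbove G w) ⟨S, hS, rfl⟩

lemma alphaW_le {B : ℝ}
    (h : ∀ S : Finset V, (∀ a ∈ S, ∀ b ∈ S, ¬ G.Adj a b) → ∑ a ∈ S, w a ≤ B) :
    alphaW G w ≤ B := by
  refine csSup_le ⟨0, ∅, by simp⟩ ?_
  rintro v ⟨S, hS, rfl⟩
  exact h S hS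

lemma alphaW_induce_le (s : Finset V) :
    alphaW (G.induce (↑s : Set V)) (fun j => w ↑j) ≤ alphaW G w := by
  refine alphaW_le _ _ fun S' hS' => ?_
  have hinj : Set.InjOn (Subtype.val : (↑s : Set V) → V) ↑S' :=
    Subtype.val_injective.injOn
  rw [← Finset.sum_image hinj]
  refine le_alphaW G w ?_
  intro a ha b hb
  obtain ⟨a', ha', rfl⟩ := Finset.mem_image.1 ha
  obtain ⟨b', hb', rfl⟩ := Finset.mem_image.1 hb
  exact hS' a' ha' b' hb'

lemma alphaW_induce_add_le (i : V) (s : Finset V) (hs : ∀ j ∈ s, j ≠ i ∧ ¬ G.Adj i j) :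
    alphaW (G.induce (↑s : Set V)) (fun j => w ↑j) + w i ≤ alphaW G w := by
  rw [← le_sub_iff_add_le]
  refine alphaW_le _ _ fun S' hS' => ?_
  rw [le_sub_iff_add_le]
  have hinj : Set.InjOn (Subtype.val : (↑s : Set V) → V) ↑S' :=
    Subtype.val_injective.injOn
  have hmem : ∀ a' ∈ S', (↑a' : V) ∈ s := fun a' _ => Finset.mem_coe.1 a'.2
  have hi : i ∉ S'.image (Subtype.val : (↑s : Set V) → V) := by
    intro h
    obtain ⟨a', ha', he⟩ := Finset.mem_image.1 h
    exact (hs _ (hmem a' ha')).1 he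
  have : ∑ a ∈ S', w ↑a + w i = ∑ a ∈ insert i (S'.image Subtype.val), w a := by
    rw [Finset.sum_insert hi, ← Finset.sum_image hinj, add_comm]
  rw [this]
  refine le_alphaW G w ?_
  intro a ha b hb hadj
  rcases Finset.mem_insert.1 ha with rfl | ha'
  · rcases Finset.mem_insert.1 hb with rfl | hb'
    · exact G.irrefl hadj
    · obtain ⟨b', hb'', rfl⟩ := Finset.mem_image.1 hb'
      exact (hs _ (hmem b' hb'')).2 hadj
  · rcases Finset.mem_insert.1 hb with rfl | hb'
    · obtain ⟨a', ha'', rfl⟩ := Finset.mem_image.1 ha'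
      exact (hs _ (hmem a' ha'')).2 hadj.symm
    · obtain ⟨a', ha'', rfl⟩ := Finset.mem_image.1 ha'
      obtain ⟨b', hb'', rfl⟩ := Finset.mem_image.1 hb'
      exact hS' a' ha'' b' hb'' hadj

end Alpha

section Struct
variable {V : Type*} [Fintype V] [DecidableEq V]

open Classical in
noncomputable def nodeSum (w : V → ℝ) (s : Finset V) : MvPolynomial V ℝ :=
  ∑ v ∈ s, C (w v) * X v

noncomputable def edgeSum (G : SimpleGraph V) [DecidableRel G.Adj] (W : V → V → ℝ)
    (s : Finset V) : MvPolynomial V ℝ :=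
  ∑ a ∈ s, ∑ b ∈ s, if G.Adj a b then C (W a b) * (X a * X b) else 0

lemma pGW_eq (G : SimpleGraph V) [DecidableRel G.Adj] (w : V → ℝ) (W : V → V → ℝ) :
    pGW G w W = nodeSum w Finset.univ - C (2⁻¹ : ℝ) * edgeSum G W Finset.univ := by
  rw [pGW, nodeSum, edgeSum]
  congr 1
  congr 1
  rw [Finset.sum_filter, Fintype.sum_prod_type]
  refine Finset.sum_congr rfl fun a _ => Finset.sum_congr rfl fun b _ => ?_
  by_cases h : G.Adj a b
  · rw [if_pos h, if_pos h]
  · rw [if_neg h, if_neg h]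

lemma rename_pGW (G : SimpleGraph V) [DecidableRel G.Adj] (w : V → ℝ) (W : V → V → ℝ)
    (s : Finset V) :
    rename (Subtype.val : (↑s : Set V) → V)
      (pGW (G.induce (↑s : Set V)) (fun j => w ↑j) (fun a b => W ↑a ↑b)) =
    nodeSum w s - C (2⁻¹ : ℝ) * edgeSum G W s := by
  classical
  rw [pGW, map_sub, map_mul, map_sum, map_sum, rename_C]
  congr 1
  · rw [nodeSum, ← Finset.sum_finset_coe (fun v => C (w v) * X v) s]
    refine Finset.sum_congr rfl fun a _ => ?_
    rw [map_mul, rename_C, rename_X]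
  · congr 1
    rw [Finset.sum_filter, Fintype.sum_prod_type]
    rw [edgeSum, ← Finset.sum_finset_coe (fun a => ∑ b ∈ s,
      if G.Adj a b then C (W a b) * (X a * X b) else 0) s]
    refine Finset.sum_congr rfl fun a _ => ?_
    rw [← Finset.sum_finset_coe (fun b =>
      if G.Adj (↑a : V) b then C (W ↑a b) * (X (↑a : V) * X b : MvPolynomial V ℝ) else 0) s]
    refine Finset.sum_congr rfl fun b _ => ?_
    by_cases h : G.Adj (↑a : V) ↑b
    · rw [if_pos h, if_pos (show (G.induce (↑s : Set V)).Adj (a, b).1 (a, b).2 from h),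
        map_mul, map_mul, rename_C, rename_X, rename_X]
    · rw [if_neg h, if_neg (show ¬ (G.induce (↑s : Set V)).Adj (a, b).1 (a, b).2 from h)]
end Struct

section Split
variable {V : Type*} [Fintype V] [DecidableEq V]
variable (G : SimpleGraph V) [DecidableRel G.Adj] (w : V → ℝ) (W : V → V → ℝ) (i : V)

lemma nodeSum_split1 :
    nodeSum w Finset.univ = nodeSum w (Finset.univ.erase i) + C (w i) * X i :=
  (Finset.sum_erase_add _ _ (Finset.mem_univ i)).symm

lemma filter_adj_erase :
    (Finset.univ.erase i).filter (fun j => G.Adj i j) =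
      Finset.univ.filter (fun j => G.Adj i j) := by
  ext j
  simp only [Finset.mem_filter, Finset.mem_erase, Finset.mem_univ, true_and, and_true]
  exact ⟨fun h => h.2, fun h => ⟨fun he => G.irrefl (he ▸ h), h⟩⟩

lemma filter_nadj_erase :
    (Finset.univ.erase i).filter (fun j => ¬ G.Adj i j) =
      Finset.univ.filter (fun j => j ≠ i ∧ ¬ G.Adj i j) := by
  ext j
  simp only [Finset.mem_filter, Finset.mem_erase, Finset.mem_univ, true_and]
  tauto

lemma nodeSum_split2 :
    nodeSum w (Finset.univ.erase i) =
      nodeSum w (Finset.univ.filter (fun j => j ≠ i ∧ ¬ G.Adj i j)) +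
      ∑ j, (if G.Adj i j then C (w j) * X j else 0) := by
  rw [nodeSum, ← Finset.sum_filter_add_sum_filter_not (Finset.univ.erase i)
    (fun j => G.Adj i j), filter_adj_erase, filter_nadj_erase, add_comm]
  congr 1
  rw [Finset.sum_filter]

lemma edgeSum_split1 :
    edgeSum G W Finset.univ = edgeSum G W (Finset.univ.erase i)
      + (∑ b, if G.Adj i b then C (W i b) * (X i * X b) else 0)
      + (∑ a, if G.Adj a i then C (W a i) * (X a * X i) else 0) := by
  classical
  set t : V → V → MvPolynomial V ℝ :=
    fun a b => if G.Adj a b then C (W a b) * (X a * X b) else 0 with ht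
  have hcol : ∑ a ∈ Finset.univ.erase i, t a i = ∑ a, t a i :=
    Finset.sum_erase _ (by simp [ht, G.irrefl])
  have houter : ∑ a, (∑ b, t a b) = ∑ a ∈ Finset.univ.erase i, (∑ b, t a b) + ∑ b, t i b :=
    (Finset.sum_erase_add _ _ (Finset.mem_univ i)).symm
  have hrow : ∀ a : V, (∑ b, t a b) = (∑ b ∈ Finset.univ.erase i, t a b) + t a i :=
    fun a => (Finset.sum_erase_add _ _ (Finset.mem_univ i)).symm
  rw [edgeSum, edgeSum] at *
  rw [houter, Finset.sum_congr rfl (fun a _ => hrow a), Finset.sum_add_distrib, hcol]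
  ring

lemma edgeSum_split2 :
    edgeSum G W (Finset.univ.erase i) =
      edgeSum G W (Finset.univ.filter (fun j => j ≠ i ∧ ¬ G.Adj i j))
      + ∑ a ∈ Finset.univ.erase i, ∑ b ∈ Finset.univ.erase i,
          (if G.Adj a b ∧ (G.Adj i a ∨ G.Adj i b) then C (W a b) * (X a * X b) else 0) := by
  classical
  have hfilt : edgeSum G W (Finset.univ.filter (fun j => j ≠ i ∧ ¬ G.Adj i j)) =
      ∑ a ∈ Finset.univ.erase i, ∑ b ∈ Finset.univ.erase i,
        (if (¬ G.Adj i a ∧ ¬ G.Adj i b) ∧ G.Adj a b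
          then C (W a b) * (X a * X b) else 0) := by
    rw [edgeSum, ← filter_nadj_erase G i, Finset.sum_filter]
    refine Finset.sum_congr rfl fun a _ => ?_
    rw [Finset.sum_filter]
    by_cases ha : G.Adj i a
    · rw [if_neg (not_not_intro ha)]
      refine (Finset.sum_eq_zero fun b _ => ?_).symm
      rw [if_neg (by tauto)]
    · rw [if_pos ha]
      refine Finset.sum_congr rfl fun b _ => ?_
      by_cases hb : G.Adj i b
      · rw [if_neg (not_not_intro hb), if_neg (by tauto)]
      · rw [if_pos hb]
        by_cases hab : G.Adj a b
        · rw [if_pos hab, if_pos (by tauto)]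
        · rw [if_neg hab, if_neg (by tauto)]
  rw [hfilt, edgeSum, ← Finset.sum_add_distrib]
  refine Finset.sum_congr rfl fun a _ => ?_
  rw [← Finset.sum_add_distrib]
  refine Finset.sum_congr rfl fun b _ => ?_
  by_cases hab : G.Adj a b
  · by_cases hi : G.Adj i a ∨ G.Adj i b
    · rw [if_pos hab, if_neg (by tauto), if_pos (by tauto), zero_add]
    · rw [if_pos hab, if_pos (by tauto), if_neg (by tauto), add_zero]
  · rw [if_neg hab, if_neg (by tauto), if_neg (by tauto), add_zero]

end Split

/-- Let `(G,w)` have node weights `w ≥ 0` and edge weights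
`w_{ij} ≥ max(w_i,w_j)`, and let `i` be a node.  If `f_{G−i,w} ∈ H_{t₁}` and
`f_{G⊖i,w} ∈ H_{t₂}` (so that `rk_H(G−i,w) ≤ t₁` and `rk_H(G⊖i,w) ≤ t₂`), then
`f_{G,w} ∈ H_{max(t₁+1, t₂+1, 3)}`; hence
`rk_H(G,w) ≤ max(rk_H(G−i,w)+1, rk_H(G⊖i,w)+1, 3)`.  Here `G−i` is the induced subgraph
obtained by deleting node `i`, and `G⊖i` the one obtained by deleting `i` and its
neighbours, both with the restricted weights. -/
theorem handelman_rank_delete_node {V : Type*} [Fintype V] [DecidableEq V]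
    (G : SimpleGraph V) [DecidableRel G.Adj]
    (w : V → ℝ) (W : V → V → ℝ) (hw : ∀ v, 0 ≤ w v)
    (hWs : ∀ i j, W i j = W j i)
    (hW : ∀ i j, G.Adj i j → max (w i) (w j) ≤ W i j)
    (i : V) (t₁ t₂ : ℕ)
    (h₁ : InHandelman t₁
      (C (alphaW (G.induce (↑(Finset.univ.erase i) : Set V))
            (fun j => w ↑j)) -
        pGW (G.induce (↑(Finset.univ.erase i) : Set V))
          (fun j => w ↑j) (fun a b => W ↑a ↑b)))
    (h₂ : InHandelman t₂
      (C (alphaW (G.induce (↑(Finset.univ.filter fun j => j ≠ i ∧ ¬ G.Adj i j) : Set V))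
            (fun j => w ↑j)) -
        pGW (G.induce (↑(Finset.univ.filter fun j => j ≠ i ∧ ¬ G.Adj i j) : Set V))
          (fun j => w ↑j) (fun a b => W ↑a ↑b))) :
    InHandelman (max (max (t₁ + 1) (t₂ + 1)) 3) (C (alphaW G w) - pGW G w W) := by
  classical
  set M := max (max (t₁ + 1) (t₂ + 1)) 3 with hM
  have h3M : 3 ≤ M := le_max_right _ _
  -- abbreviations
  set A := alphaW G w with hA
  set A₁ := alphaW (G.induce (↑(Finset.univ.erase i) : Set V)) (fun j => w ↑j) with hA₁
  set A₂ := alphaW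
    (G.induce (↑(Finset.univ.filter fun j => j ≠ i ∧ ¬ G.Adj i j) : Set V))
    (fun j => w ↑j) with hA₂
  set q₁ : MvPolynomial (↑(Finset.univ.erase i) : Set V) ℝ :=
    C A₁ - pGW (G.induce (↑(Finset.univ.erase i) : Set V))
      (fun j => w ↑j) (fun a b => W ↑a ↑b) with hq₁
  set q₂ : MvPolynomial (↑(Finset.univ.filter fun j => j ≠ i ∧ ¬ G.Adj i j) : Set V) ℝ :=
    C A₂ - pGW (G.induce (↑(Finset.univ.filter fun j => j ≠ i ∧ ¬ G.Adj i j) : Set V))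
      (fun j => w ↑j) (fun a b => W ↑a ↑b) with hq₂
  set cross : MvPolynomial V ℝ :=
    ∑ a ∈ Finset.univ.erase i, ∑ b ∈ Finset.univ.erase i,
      (if G.Adj a b ∧ (G.Adj i a ∨ G.Adj i b) then C (W a b) * (X a * X b) else 0) with hcross
  -- the master algebraic identity
  have hmain : C A - pGW G w W
      = (1 - X i) * rename (Subtype.val : (↑(Finset.univ.erase i) : Set V) → V) q₁
      + X i * rename
          (Subtype.val : (↑(Finset.univ.filter fun j => j ≠ i ∧ ¬ G.Adj i j) : Set V) → V) q₂
      + C (A - A₁) * (1 - X i)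
      + C (A - A₂ - w i) * X i
      + (∑ j, if G.Adj i j then C (W i j - w j) * (X i * X j) else 0)
      + C (2⁻¹ : ℝ) * (X i * cross) := by
    rw [hq₁, hq₂, map_sub, map_sub, rename_C, rename_C, rename_pGW, rename_pGW,
      pGW_eq, nodeSum_split1 w i, nodeSum_split2 G w i, edgeSum_split1 G W i,
      edgeSum_split2 G W i]
    have hcolrow : (∑ a, if G.Adj a i then C (W a i) * (X a * X i) else 0)
        = ∑ b, if G.Adj i b then C (W i b) * (X i * X b) else 0 := by
      refine Finset.sum_congr rfl fun a _ => ?_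
      by_cases h : G.Adj a i
      · rw [if_pos h, if_pos h.symm, hWs a i, mul_comm (X a) (X i)]
      · rw [if_neg h, if_neg (fun h' => h h'.symm)]
    have hXnN : X i * (∑ j, if G.Adj i j then C (w j) * X j else 0)
        = ∑ j, if G.Adj i j then C (w j) * (X i * X j) else 0 := by
      rw [Finset.mul_sum]
      refine Finset.sum_congr rfl fun j _ => ?_
      by_cases h : G.Adj i j
      · rw [if_pos h, if_pos h]; ring
      · rw [if_neg h, if_neg h, mul_zero]
    have hsplitW : (∑ j, if G.Adj i j then C (W i j - w j) * (X i * X j) else 0)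
        = (∑ j, if G.Adj i j then C (W i j) * (X i * X j) else 0)
          - ∑ j, if G.Adj i j then C (w j) * (X i * X j) else 0 := by
      rw [← Finset.sum_sub_distrib]
      refine Finset.sum_congr rfl fun j _ => ?_
      by_cases h : G.Adj i j
      · rw [if_pos h, if_pos h, if_pos h, map_sub, sub_mul]
      · rw [if_neg h, if_neg h, if_neg h, sub_zero]
    have h2 : (C (2⁻¹ : ℝ) : MvPolynomial V ℝ) * 2 = 1 := by
      rw [show (2 : MvPolynomial V ℝ) = C (2 : ℝ) from (map_ofNat C 2).symm, ← map_mul]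
      norm_num
    rw [hcolrow, hsplitW, ← hcross]
    simp only [map_sub]
    linear_combination (∑ j, if G.Adj i j then C (W i j) * (X i * X j) else 0) * h2 - hXnN
  rw [hmain]
  -- now each piece is Handelman
  have hwW : ∀ a b, G.Adj a b → 0 ≤ W a b :=
    fun a b hab => le_trans (le_trans (hw a) (le_max_left _ _)) (hW a b hab)
  have piece1 : InHandelman M
      ((1 - X i) * rename (Subtype.val : (↑(Finset.univ.erase i) : Set V) → V) q₁) := by
    refine IH_resum ?_ (le_trans (le_max_left _ _) (le_max_left _ _))
    exact (IH_mul_rename ⟨Subtype.val, Subtype.val_injective⟩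
      (fun x => (Finset.mem_erase.1 (Finset.mem_coe.1 x.2)).1) h₁).1
  have piece2 : InHandelman M
      (X i * rename
        (Subtype.val : (↑(Finset.univ.filter fun j => j ≠ i ∧ ¬ G.Adj i j) : Set V) → V) q₂) := by
    refine IH_resum ?_ (le_trans (le_max_right _ _) (le_max_left _ _))
    exact (IH_mul_rename ⟨Subtype.val, Subtype.val_injective⟩
      (fun x => (Finset.mem_filter.1 (Finset.mem_coe.1 x.2)).2.1) h₂).2
  have piece3 : InHandelman M (C (A - A₁) * (1 - X i)) := by
    rw [← handTerm_single_empty]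
    exact IH_single (sub_nonneg.2 (alphaW_induce_le G w _)) (Finset.empty_subset _)
      (le_trans (by simp) h3M)
  have piece4 : InHandelman M (C (A - A₂ - w i) * X i) := by
    rw [← handTerm_single]
    refine IH_single ?_ (Finset.Subset.refl _) (le_trans (by simp) h3M)
    have := alphaW_induce_add_le G w i (Finset.univ.filter fun j => j ≠ i ∧ ¬ G.Adj i j)
      (fun j hj => (Finset.mem_filter.1 hj).2)
    linarith
  have piece5 : InHandelman M
      (∑ j, if G.Adj i j then C (W i j - w j) * (X i * X j) else 0) := by
    rw [← Finset.sum_filter]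
    have hterm : ∀ j ∈ Finset.univ.filter (fun j => G.Adj i j),
        C (W i j - w j) * (X i * X j) = C (W i j - w j) * handTerm {i, j} {i, j} := by
      intro j hj
      have hij : i ≠ j := G.ne_of_adj ((Finset.mem_filter.1 hj).2)
      rw [handTerm_self, Finset.prod_insert (Finset.notMem_singleton.2 hij),
        Finset.prod_singleton]
    rw [Finset.sum_congr rfl hterm]
    refine IH_resum (t := 3) ?_ h3M
    refine IH_sum _ _ _ _ (fun j hj => ?_) (fun j _ => Finset.Subset.refl _) (fun j hj => ?_)
    · have hadj := (Finset.mem_filter.1 hj).2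
      have := hW i j hadj
      have := le_max_right (w i) (w j)
      linarith
    · calc ({i, j} : Finset V).card ≤ ({j} : Finset V).card + 1 := Finset.card_insert_le _ _
        _ ≤ 3 := by simp
  have piece6 : InHandelman M (C (2⁻¹ : ℝ) * (X i * cross)) := by
    have hstep : C (2⁻¹ : ℝ) * (X i * cross)
        = ∑ a ∈ Finset.univ.erase i, ∑ b ∈ Finset.univ.erase i,
            (if G.Adj a b ∧ (G.Adj i a ∨ G.Adj i b)
              then C (2⁻¹ * W a b) * handTerm {i, a, b} {i, a, b} else 0) := by
      rw [hcross, Finset.mul_sum, Finset.mul_sum]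
      refine Finset.sum_congr rfl fun a ha => ?_
      rw [Finset.mul_sum, Finset.mul_sum]
      refine Finset.sum_congr rfl fun b hb => ?_
      by_cases h : G.Adj a b ∧ (G.Adj i a ∨ G.Adj i b)
      · rw [if_pos h, if_pos h]
        have hia : i ≠ a := fun he => (Finset.mem_erase.1 ha).1 he.symm
        have hib : i ≠ b := fun he => (Finset.mem_erase.1 hb).1 he.symm
        have hab : a ≠ b := G.ne_of_adj h.1
        rw [handTerm_self, Finset.prod_insert (by simp [hia, hib]),
          Finset.prod_insert (Finset.notMem_singleton.2 hab), Finset.prod_singleton, map_mul]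
        ring
      · rw [if_neg h, if_neg h, mul_zero, mul_zero]
    rw [hstep]
    have hinner : ∀ a ∈ Finset.univ.erase i,
        (∑ b ∈ Finset.univ.erase i,
          (if G.Adj a b ∧ (G.Adj i a ∨ G.Adj i b)
            then C (2⁻¹ * W a b) * handTerm {i, a, b} {i, a, b} else 0))
        = ∑ b ∈ (Finset.univ.erase i).filter (fun b => G.Adj a b ∧ (G.Adj i a ∨ G.Adj i b)),
            C (2⁻¹ * W a b) * handTerm {i, a, b} {i, a, b} := by
      intro a _
      rw [Finset.sum_filter]
    rw [Finset.sum_congr rfl hinner, Finset.sum_sigma']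
    refine IH_resum (t := 3) ?_ h3M
    refine IH_sum (ι := Σ _ : V, V) _ (fun k => 2⁻¹ * W k.1 k.2)
      (fun k => {i, k.1, k.2}) (fun k => {i, k.1, k.2})
      (fun k hk => ?_) (fun k _ => Finset.Subset.refl _) (fun k hk => ?_)
    · have hk2 := Finset.mem_filter.1 (Finset.mem_sigma.1 hk).2
      exact mul_nonneg (by norm_num) (hwW _ _ hk2.2.1)
    · calc ({i, k.1, k.2} : Finset V).card
          ≤ ({k.1, k.2} : Finset V).card + 1 := Finset.card_insert_le _ _
        _ ≤ (({k.2} : Finset V).card + 1) + 1 :=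
            Nat.add_le_add_right (Finset.card_insert_le _ _) _
        _ ≤ 3 := by simp
  exact IH_add (IH_add (IH_add (IH_add (IH_add piece1 piece2) piece3) piece4) piece5) piece6
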